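/- The edge metric dimension of the cycle graph C_n (n ≥ 3) equals 2. -/

import Mathlib

open SimpleGraph

variable {V : Type*}

/-- `S` is a vertex metric generator of `G`. -/
def IsVMG (G : SimpleGraph V) (S : Set V) : Prop :=
  ∀ x x' : V, x ≠ x' → ∃ s ∈ S, G.dist s x ≠ G.dist s x'

/-- The vertex metric dimension of `G`. -/
noncomputable def vdim (G : SimpleGraph V) [Fintype V] : ℕ :=
  sInf {n | ∃ S : Finset V, IsVMG G ↑S ∧ S.card = n}

/-- Distance from a vertex to an edge: minimum over the endpoints. -/
noncomputable def eDist (G : SimpleGraph V) (s : V) : Sym2 V → ℕ :=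
  Sym2.lift ⟨fun a b => min (G.dist s a) (G.dist s b), fun a b => min_comm _ _⟩

/-- `S` is an edge metric generator of `G`. -/
def IsEMG (G : SimpleGraph V) (S : Set V) : Prop :=
  ∀ e ∈ G.edgeSet, ∀ e' ∈ G.edgeSet, e ≠ e' → ∃ s ∈ S, eDist G s e ≠ eDist G s e'

/-- The edge metric dimension of `G`. -/
noncomputable def edim (G : SimpleGraph V) [Fintype V] : ℕ :=
  sInf {n | ∃ S : Finset V, IsEMG G ↑S ∧ S.card = n}

namespace CycAux

open Fin.NatCast

variable {n : ℕ}

lemma sub_val (a b : Fin n) :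
    (a - b).val = if b.val ≤ a.val then a.val - b.val else a.val + n - b.val := by
  have ha := a.isLt; have hb := b.isLt
  rw [Fin.sub_def]
  simp only
  split
  · have h : n - b.val + a.val = (a.val - b.val) + n := by omega
    rw [h, Nat.add_mod_right, Nat.mod_eq_of_lt (by omega)]
  · have h : n - b.val + a.val = a.val + n - b.val := by omega
    rw [h]
    exact Nat.mod_eq_of_lt (by omega)

variable [NeZero n]

lemma val_one (hn : 2 ≤ n) : ((1 : Fin n) : ℕ) = 1 := by
  rw [Fin.val_one']; exact Nat.mod_eq_of_lt (by omega)

lemma add_one_val (hn : 2 ≤ n) (a : Fin n) :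
    (a + 1).val = if a.val + 1 = n then 0 else a.val + 1 := by
  have ha := a.isLt
  rw [Fin.add_def, val_one hn]
  simp only
  split
  · simp [*]
  · exact Nat.mod_eq_of_lt (by omega)

lemma adj_add_one (hn : 2 ≤ n) (u : Fin n) : (cycleGraph n).Adj u (u + 1) := by
  rw [cycleGraph_adj']
  right
  rw [add_sub_cancel_left]
  exact val_one hn

lemma dist_le_nat (hn : 2 ≤ n) (u : Fin n) (k : ℕ) :
    (cycleGraph n).dist u (u + (k : Fin n)) ≤ k := by
  have hconn : (cycleGraph n).Connected := by
    obtain ⟨m, rfl⟩ : ∃ m, n = m + 1 := ⟨n - 1, by omega⟩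
    exact cycleGraph_connected
  induction k with
  | zero => simp
  | succ k ih =>
    have h1 : ((k + 1 : ℕ) : Fin n) = (k : Fin n) + 1 := by push_cast; ring
    rw [h1, ← add_assoc]
    calc (cycleGraph n).dist u (u + (k : Fin n) + 1)
        ≤ (cycleGraph n).dist u (u + (k : Fin n)) +
          (cycleGraph n).dist (u + (k : Fin n)) (u + (k : Fin n) + 1) :=
          hconn.dist_triangle
      _ ≤ k + 1 := by
          have := SimpleGraph.dist_le (adj_add_one hn (u + (k : Fin n))).toWalk
          simp only [Walk.length_cons, Walk.length_nil] at this
          omega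

lemma walk_lower (_hn : 2 ≤ n) {v : Fin n} : ∀ {u : Fin n} (w : (cycleGraph n).Walk u v),
    min (v - u).val (u - v).val ≤ w.length := by
  intro u w
  induction w with
  | nil => simp [sub_self]
  | @cons u x v h p ih =>
    have hx := cycleGraph_adj'.mp h
    have key : min (v - u).val (u - v).val ≤ min (v - x).val (x - v).val + 1 := by
      have h1 := sub_val v u
      have h2 := sub_val u v
      have h3 := sub_val v x
      have h4 := sub_val x v
      have h5 := sub_val u x
      have h6 := sub_val x u
      have hu := u.isLt; have hv := v.isLt; have hw := x.isLt
      rcases hx with hx | hx <;>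
        [rw [h5] at hx; rw [h6] at hx] <;>
        rw [h1, h2, h3, h4] <;> split_ifs at * <;> omega
    simp only [Walk.length_cons]
    omega

lemma cyc_dist (hn : 2 ≤ n) (u v : Fin n) :
    (cycleGraph n).dist u v = min (v - u).val (u - v).val := by
  have hconn : (cycleGraph n).Connected := by
    obtain ⟨m, rfl⟩ : ∃ m, n = m + 1 := ⟨n - 1, by omega⟩
    exact cycleGraph_connected
  apply le_antisymm
  · apply le_min
    · have := dist_le_nat hn u (v - u).val
      rwa [Fin.cast_val_eq_self, add_sub_cancel] at this
    · have := dist_le_nat hn v (u - v).val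
      rwa [Fin.cast_val_eq_self, add_sub_cancel, SimpleGraph.dist_comm] at this
  · obtain ⟨w, hw⟩ := hconn.exists_walk_length_eq_dist u v
    have := walk_lower hn w
    omega

lemma edge_mem (hn : 2 ≤ n) {e : Sym2 (Fin n)} (he : e ∈ (cycleGraph n).edgeSet) :
    ∃ i : Fin n, e = s(i, i + 1) := by
  induction e with
  | _ u v =>
    rw [mem_edgeSet, cycleGraph_adj'] at he
    rcases he with h | h
    · refine ⟨v, ?_⟩
      have huv : u = v + 1 := by
        have h1 : u - v = 1 := Fin.ext (by rw [h, val_one hn])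
        have := congrArg (· + v) h1
        simpa [sub_add_cancel, add_comm] using this
      rw [huv]
      exact Sym2.eq_swap
    · refine ⟨u, ?_⟩
      have huv : v = u + 1 := by
        have h1 : v - u = 1 := Fin.ext (by rw [h, val_one hn])
        have := congrArg (· + u) h1
        simpa [sub_add_cancel, add_comm] using this
      rw [huv]

lemma eDist_mk (G : SimpleGraph (Fin n)) (s a b : Fin n) :
    eDist G s s(a, b) = min (G.dist s a) (G.dist s b) := by
  simp [eDist]

lemma eDist0 (hn : 3 ≤ n) (i : Fin n) :
    eDist (cycleGraph n) 0 s(i, i + 1) = min i.val (n - 1 - i.val) := by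
  have hn2 : 2 ≤ n := by omega
  rw [eDist_mk, cyc_dist hn2, cyc_dist hn2, sub_zero, sub_zero]
  have h1 := sub_val (0 : Fin n) i
  have h2 := sub_val (0 : Fin n) (i + 1)
  have h3 := add_one_val hn2 i
  rw [Fin.val_zero] at h1 h2
  rw [h3] at h2
  have hi := i.isLt
  rw [h1, h2, h3]
  split_ifs at * <;> omega

lemma eDist1 (hn : 3 ≤ n) (i : Fin n) :
    eDist (cycleGraph n) 1 s(i, i + 1) = min (i.val - 1) (n - i.val) := by
  have hn2 : 2 ≤ n := by omega
  rw [eDist_mk, cyc_dist hn2, cyc_dist hn2, add_sub_cancel_right]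
  have h1 := sub_val i (1 : Fin n)
  have h2 := sub_val (1 : Fin n) i
  have h3 := sub_val (1 : Fin n) (i + 1)
  have h4 := add_one_val hn2 i
  rw [val_one hn2] at h1 h2 h3
  rw [h4] at h3
  have hi := i.isLt
  rw [h1, h2, h3]
  split_ifs at * <;> omega

lemma natcore {a b : ℕ} (hn : 3 ≤ n) (ha : a < n) (hb : b < n)
    (h0 : min a (n - 1 - a) = min b (n - 1 - b))
    (h1 : min (a - 1) (n - a) = min (b - 1) (n - b)) : a = b := by
  omega

end CycAux

open CycAux in
/-- The edge metric dimension of the cycle `C_n` (`n ≥ 3`) equals 2. -/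
theorem stmt15 (n : ℕ) (hn : 3 ≤ n) : edim (SimpleGraph.cycleGraph n) = 2 := by
  haveI : NeZero n := ⟨by omega⟩
  have hn2 : 2 ≤ n := by omega
  have hval2 : ((1 : Fin n) + 1).val = 2 := by
    rw [add_one_val hn2, val_one hn2]
    split_ifs with h
    · omega
    · rfl
  have h01 : (0 : Fin n) ≠ 1 := by
    intro h
    have := congrArg Fin.val h
    rw [Fin.val_zero, val_one hn2] at this
    omega
  -- The set {0, 1} is an edge metric generator
  have hEMG : IsEMG (cycleGraph n) ↑({0, 1} : Finset (Fin n)) := by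
    intro e he e' he' hne
    obtain ⟨i, rfl⟩ := edge_mem hn2 he
    obtain ⟨j, rfl⟩ := edge_mem hn2 he'
    by_contra hc
    push_neg at hc
    have h0 := hc 0 (by simp)
    have h1 := hc 1 (by simp)
    rw [eDist0 hn i, eDist0 hn j] at h0
    rw [eDist1 hn i, eDist1 hn j] at h1
    have : i = j := Fin.ext (natcore hn i.isLt j.isLt h0 h1)
    exact hne (by rw [this])
  have hmem : 2 ∈ {k | ∃ S : Finset (Fin n), IsEMG (cycleGraph n) ↑S ∧ S.card = k} :=
    ⟨{0, 1}, hEMG, Finset.card_pair h01⟩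
  have hlb : ∀ k ∈ {k | ∃ S : Finset (Fin n), IsEMG (cycleGraph n) ↑S ∧ S.card = k},
      2 ≤ k := by
    rintro k ⟨S, hS, rfl⟩
    by_contra hlt
    push_neg at hlt
    have hle : ∀ a ∈ S, ∀ b ∈ S, a = b := Finset.card_le_one.mp (by omega)
    rcases S.eq_empty_or_nonempty with rfl | ⟨x, hx⟩
    · have hne : s(0, 0 + 1) ≠ s((1 : Fin n), 1 + 1) := by
        intro h
        rw [Sym2.eq_iff] at h
        rcases h with ⟨h, -⟩ | ⟨h, -⟩
        · exact h01 h
        · have := congrArg Fin.val h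
          rw [Fin.val_zero, hval2] at this
          omega
      obtain ⟨s, hs, -⟩ := hS s(0, 0 + 1) ((mem_edgeSet _).mpr (adj_add_one hn2 0))
        s(1, 1 + 1) ((mem_edgeSet _).mpr (adj_add_one hn2 1)) hne
      simp at hs
    · have hx1 : (x - 1) + 1 = x := sub_add_cancel x 1
      have hne : s(x, x + 1) ≠ s(x - 1, (x - 1) + 1) := by
        rw [hx1]
        intro h
        rw [Sym2.eq_iff] at h
        rcases h with ⟨h1, -⟩ | ⟨-, h2⟩
        · -- x = x - 1 gives 1 = 0
          have h0 : (1 : Fin n) = 0 :=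
            add_eq_left.mp (eq_sub_iff_add_eq.mp h1)
          have := congrArg Fin.val h0
          rw [val_one hn2, Fin.val_zero] at this
          omega
        · -- x + 1 = x - 1 gives 2 = 0
          have h0 : (1 + 1 : Fin n) = 0 :=
            add_eq_left.mp (by rw [← add_assoc]; exact eq_sub_iff_add_eq.mp h2)
          have := congrArg Fin.val h0
          rw [hval2, Fin.val_zero] at this
          omega
      obtain ⟨s, hs, hd⟩ := hS s(x, x + 1) ((mem_edgeSet _).mpr (adj_add_one hn2 x))
        s(x - 1, (x - 1) + 1) ((mem_edgeSet _).mpr (adj_add_one hn2 (x - 1))) hne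
      have hsx : s = x := hle s hs x hx
      rw [hsx, hx1] at hd
      rw [eDist_mk, eDist_mk, SimpleGraph.dist_self] at hd
      simp at hd
  exact le_antisymm (Nat.sInf_le hmem) (le_csInf ⟨2, hmem⟩ hlb)
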